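/- Let ε, τ, β > 0, a > 0 (with a = [Λ(1−M)]^{j−1}), and define h(k²) = (ε/τ)·k⁴ + q·k² + a/τ where q = (2(1+ξ²) − χβ)/(2τ) and ξ = √(a·ε). If χ = χ_c = 2(1+ξ)²/β, then the minimum of h over k² > 0 is zero and is attained at k_c² = ξ/ε. -/

import Mathlib

theorem stmt5 (ε τ β a χ ξ : ℝ) (hε : 0 < ε) (hτ : 0 < τ) (hβ : 0 < β) (ha : 0 < a)
    (hξ : ξ = Real.sqrt (a * ε)) (hχ : χ = 2 * (1 + ξ)^2 / β)
    (h : ℝ → ℝ)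
    (hh : ∀ k2, h k2 = (ε / τ) * k2^2 + ((2 * (1 + ξ^2) - χ * β) / (2 * τ)) * k2 + a / τ) :
    h (ξ / ε) = 0 ∧ ∀ k2 > 0, 0 ≤ h k2 := by
  have hξ2 : ξ ^ 2 = a * ε := by
    rw [hξ, sq, Real.mul_self_sqrt (by positivity)]
  have hχβ : χ * β = 2 * (1 + ξ) ^ 2 := by
    rw [hχ]; field_simp
  constructor
  · rw [hh, hχβ]
    field_simp
    ring_nf
    linear_combination (-1) * hξ2
  · intro k2 _
    rw [hh, hχβ]
    have key : (ε / τ) * k2^2 + ((2 * (1 + ξ^2) - 2 * (1 + ξ)^2) / (2 * τ)) * k2 + a / τ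
        = (ε * (k2 - ξ / ε)^2) / τ := by
      field_simp
      linear_combination (-1) * hξ2
    rw [key]; positivity
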